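/- Let (X,d) be a finite ultrametric space and let P = (x_1,...,x_n) be an enumeration of X such that the path x_1—...—x_n is a minimum weight spanning tree. Set s_i = d(x_i, x_{i+1}). Then for any i ≤ k and any index j with i ≤ j < k, the set {x_i, ..., x_k} is a closed ball of (X,d) whenever all weights s_i,...,s_{k-1} are strictly less than both s_{i-1} (if i > 1) and s_k (if k < n). -/

import Mathlib

/-- The weight of an edge of the complete graph on a metric space. -/
noncomputable def edgeWeight (X : Type*) [MetricSpace X] : Sym2 X → ℝ :=
  Sym2.lift ⟨fun x y => dist x y, fun x y => dist_comm x y⟩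

/-- The total weight of (the edges of) a graph on a finite metric space. -/
noncomputable def graphWeight {X : Type*} [MetricSpace X] [Fintype X]
    (G : SimpleGraph X) : ℝ :=
  ∑ e ∈ G.edgeSet.toFinite.toFinset, edgeWeight X e

/-- A minimum weight spanning tree of the complete weighted graph on a finite
metric space `X` with weights given by the metric: a tree on the vertex set `X`
whose total weight is minimal among all such trees. -/
def IsMST {X : Type*} [MetricSpace X] [Fintype X] (T : SimpleGraph X) : Prop :=
  T.IsTree ∧ ∀ G : SimpleGraph X, G.IsTree → graphWeight T ≤ graphWeight G

/-- The path graph `x 0 — x 1 — ⋯ — x (n-1)` on `X`. -/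
def pathGraphOn {X : Type*} (n : ℕ) (x : ℕ → X) : SimpleGraph X :=
  SimpleGraph.fromRel (fun u v => ∃ i : ℕ, i + 1 < n ∧ u = x i ∧ v = x (i + 1))

lemma edgeWeight_mk {X : Type*} [MetricSpace X] (u v : X) :
    edgeWeight X s(u, v) = dist u v := by
  simp [edgeWeight]

lemma graphWeight_eq {X : Type*} [MetricSpace X] [Fintype X]
    (G : SimpleGraph X) (F : Finset (Sym2 X))
    (h : ∀ e, e ∈ F ↔ e ∈ G.edgeSet) :
    graphWeight G = ∑ e ∈ F, edgeWeight X e := by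
  unfold graphWeight
  congr 1
  ext e
  simp [Set.Finite.mem_toFinset, h]

lemma sep_of_reachable {X : Type*} {G : SimpleGraph X} {S : Set X}
    (h : ∀ u v : X, G.Adj u v → (u ∈ S ↔ v ∈ S)) :
    ∀ {u v : X}, G.Reachable u v → (u ∈ S ↔ v ∈ S) := by
  intro u v hr
  obtain ⟨w⟩ := hr
  induction w with
  | nil => rfl
  | cons hadj _ ih => exact (h _ _ hadj).trans ih

lemma exchange {X : Type*} [MetricSpace X] [Fintype X] (n : ℕ) (x : ℕ → X)
    (hbij : Function.Bijective fun i : Fin n => x i.val)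
    (hmst : IsMST (pathGraphOn n x))
    (m a b : ℕ) (ham : a ≤ m) (hmb : m + 1 ≤ b) (hbn : b < n) :
    dist (x m) (x (m + 1)) ≤ dist (x a) (x b) := by
  classical
  by_contra hlt
  push_neg at hlt
  have hinj : ∀ {p q : ℕ}, p < n → q < n → x p = x q → p = q := by
    intro p q hp hq h
    exact congrArg Fin.val (hbij.injective (a₁ := ⟨p, hp⟩) (a₂ := ⟨q, hq⟩) h)
  have han : a < n := by omega
  have hmn : m + 1 < n := by omega
  have hxab : x a ≠ x b := fun h => by have := hinj han hbn h; omega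
  set R : X → X → Prop := fun u v =>
    (∃ l, l + 1 < n ∧ l ≠ m ∧ u = x l ∧ v = x (l + 1)) ∨ (u = x a ∧ v = x b) with hR
  set T : SimpleGraph X := SimpleGraph.fromRel R with hT
  have hTadj : ∀ u v, T.Adj u v ↔ u ≠ v ∧ (R u v ∨ R v u) := fun u v => by
    rw [hT]; exact SimpleGraph.fromRel_adj ..
  -- reachability along the chains
  have hchain : ∀ c c', c ≤ c' → c' < n → (c' ≤ m ∨ m < c) → T.Reachable (x c) (x c') := by
    intro c c' hcc'
    induction c', hcc' using Nat.le_induction with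
    | base => intro _ _; exact SimpleGraph.Reachable.refl _
    | succ c' hcc' ih =>
      intro hn' hcond
      have h1 : c' < n := by omega
      have hcond' : c' ≤ m ∨ m < c := by rcases hcond with h | h; exact Or.inl (by omega); exact Or.inr h
      have hne : c' ≠ m := by rcases hcond with h | h <;> omega
      have hadj : T.Adj (x c') (x (c' + 1)) := by
        rw [hTadj]
        exact ⟨fun h => by have := hinj h1 hn' h; omega, Or.inl (Or.inl ⟨c', hn', hne, rfl, rfl⟩)⟩
      exact (ih h1 hcond').trans hadj.reachable
  have hreach_a : ∀ c, c < n → T.Reachable (x a) (x c) := by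
    intro c hc
    rcases le_or_gt c m with h | h
    · rcases le_total a c with h' | h'
      · exact hchain a c h' hc (Or.inl h)
      · exact (hchain c a h' han (Or.inl ham)).symm
    · have hab : T.Adj (x a) (x b) := by
        rw [hTadj]; exact ⟨hxab, Or.inl (Or.inr ⟨rfl, rfl⟩)⟩
      have hbc : T.Reachable (x b) (x c) := by
        rcases le_total b c with h' | h'
        · exact hchain b c h' hc (Or.inr (by omega))
        · exact (hchain c b h' hbn (Or.inr h)).symm
      exact hab.reachable.trans hbc
  have hconn : T.Connected := by
    rw [SimpleGraph.connected_iff]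
    refine ⟨fun u v => ?_, ⟨x a⟩⟩
    obtain ⟨⟨c, hc⟩, rfl⟩ := hbij.surjective u
    obtain ⟨⟨c', hc'⟩, rfl⟩ := hbij.surjective v
    exact (hreach_a c hc).symm.trans (hreach_a c' hc')
  -- separating sets
  set SS : ℕ → ℕ → Set X := fun c d => x '' {t | c ≤ t ∧ t ≤ d ∧ t < n} with hSS
  have hmemS : ∀ t c d, t < n → (x t ∈ SS c d ↔ (c ≤ t ∧ t ≤ d)) := by
    intro t c d ht
    constructor
    · rintro ⟨t', ⟨h1, h2, h3⟩, heq⟩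
      have := hinj h3 ht heq
      omega
    · intro h; exact ⟨t, ⟨h.1, h.2, ht⟩, rfl⟩
  have hDadj : ∀ u v p q : X, (T \ SimpleGraph.fromEdgeSet {s(u, v)}).Adj p q →
      (R p q ∨ R q p) ∧ s(p, q) ≠ s(u, v) := by
    intro u v p q h
    rw [SimpleGraph.sdiff_adj, SimpleGraph.fromEdgeSet_adj] at h
    obtain ⟨hadj, hnot⟩ := h
    have hne := hadj.ne
    rw [hTadj] at hadj
    exact ⟨hadj.2, fun hh => hnot ⟨by simp [hh], hne⟩⟩
  have respects : ∀ (c d : ℕ) (u v : X),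
      (∀ l', l' + 1 < n → l' ≠ m → s(x l', x (l' + 1)) ≠ s(u, v) →
        ((c ≤ l' ∧ l' ≤ d) ↔ (c ≤ l' + 1 ∧ l' + 1 ≤ d))) →
      (s(x a, x b) ≠ s(u, v) → ((c ≤ a ∧ a ≤ d) ↔ (c ≤ b ∧ b ≤ d))) →
      ∀ p q : X, (T \ SimpleGraph.fromEdgeSet {s(u, v)}).Adj p q →
        (p ∈ SS c d ↔ q ∈ SS c d) := by
    intro c d u v h1 h2 p q hpq
    obtain ⟨hrel, hnee⟩ := hDadj u v p q hpq
    rcases hrel with h | h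
    · rcases h with ⟨l', h1n, h1m, rfl, rfl⟩ | ⟨rfl, rfl⟩
      · rw [hmemS _ _ _ (by omega), hmemS _ _ _ h1n]
        exact h1 l' h1n h1m hnee
      · rw [hmemS _ _ _ han, hmemS _ _ _ hbn]
        exact h2 hnee
    · rcases h with ⟨l', h1n, h1m, rfl, rfl⟩ | ⟨rfl, rfl⟩
      · rw [hmemS _ _ _ h1n, hmemS _ _ _ (by omega)]
        exact (h1 l' h1n h1m (by rwa [Sym2.eq_swap] at hnee)).symm
      · rw [hmemS _ _ _ hbn, hmemS _ _ _ han]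
        exact (h2 (by rwa [Sym2.eq_swap] at hnee)).symm
  have hacyc : T.IsAcyclic := by
    rw [SimpleGraph.isAcyclic_iff_forall_adj_isBridge]
    have key : ∀ u v : X, T.Adj u v → R u v → T.IsBridge s(u, v) := by
      intro u v huv hRuv
      rw [SimpleGraph.isBridge_iff]
      intro hreach
      rcases hRuv with ⟨l, hln, hlm, rfl, rfl⟩ | ⟨rfl, rfl⟩
      · obtain ⟨c, d, hone, hcd3, hcd4⟩ :
            ∃ c d : ℕ, ¬((c ≤ l ∧ l ≤ d) ↔ (c ≤ l + 1 ∧ l + 1 ≤ d)) ∧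
              (∀ l', l' + 1 < n → l' ≠ m → l' ≠ l →
                ((c ≤ l' ∧ l' ≤ d) ↔ (c ≤ l' + 1 ∧ l' + 1 ≤ d))) ∧
              ((c ≤ a ∧ a ≤ d) ↔ (c ≤ b ∧ b ≤ d)) := by
          rcases Nat.lt_or_ge l m with hlm' | hlm'
          · rcases le_or_gt a l with h | h
            · exact ⟨l + 1, m, by omega, fun l' u1 u2 u3 => by omega, by omega⟩
            · exact ⟨0, l, by omega, fun l' u1 u2 u3 => by omega, by omega⟩
          · have hml : m < l := by omega
            rcases le_or_gt (l + 1) b with h | h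
            · exact ⟨m + 1, l, by omega, fun l' u1 u2 u3 => by omega, by omega⟩
            · exact ⟨l + 1, n - 1, by omega, fun l' u1 u2 u3 => by omega, by omega⟩
        have hsep := respects c d (x l) (x (l + 1))
          (fun l' u1 u2 hne => hcd3 l' u1 u2 (fun h => hne (by rw [h]))) (fun _ => hcd4)
        have := sep_of_reachable hsep hreach
        rw [hmemS l c d (by omega), hmemS (l + 1) c d hln] at this
        exact hone this
      · have hsep := respects 0 m (x a) (x b)
          (fun l' u1 u2 hne => by omega) (fun hne => absurd rfl hne)
        have := sep_of_reachable hsep hreach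
        rw [hmemS a 0 m han, hmemS b 0 m hbn] at this
        omega
    intro u v huv
    rcases ((hTadj u v).mp huv).2 with h | h
    · exact key u v huv h
    · have := key v u huv.symm h
      rwa [Sym2.eq_swap] at this
  have htree : T.IsTree := ⟨hconn, hacyc⟩
  -- weights
  set f : ℕ → Sym2 X := fun l => s(x l, x (l + 1)) with hf
  have hinjf : ∀ p ∈ Finset.range (n - 1), ∀ q ∈ Finset.range (n - 1), f p = f q → p = q := by
    intro p hp q hq h
    rw [Finset.mem_range] at hp hq
    rw [hf] at h
    simp only [Sym2.eq_iff] at h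
    rcases h with ⟨h1, _⟩ | ⟨h1, h2⟩
    · exact hinj (by omega) (by omega) h1
    · have := hinj (by omega) (by omega) h1
      have := hinj (by omega) (by omega) h2
      omega
  have hFpath : ∀ e, e ∈ (Finset.range (n - 1)).image f ↔ e ∈ (pathGraphOn n x).edgeSet := by
    intro e
    constructor
    · intro he
      rw [Finset.mem_image] at he
      obtain ⟨l, hl, rfl⟩ := he
      rw [Finset.mem_range] at hl
      rw [hf, SimpleGraph.mem_edgeSet, pathGraphOn, SimpleGraph.fromRel_adj]
      exact ⟨fun h => by have := hinj (by omega) (by omega) h; omega,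
        Or.inl ⟨l, by omega, rfl, rfl⟩⟩
    · induction e using Sym2.ind with
      | _ u v =>
        intro he
        rw [SimpleGraph.mem_edgeSet, pathGraphOn, SimpleGraph.fromRel_adj] at he
        rw [Finset.mem_image]
        rcases he.2 with ⟨l, hl, rfl, rfl⟩ | ⟨l, hl, rfl, rfl⟩
        · exact ⟨l, Finset.mem_range.mpr (by omega), rfl⟩
        · exact ⟨l, Finset.mem_range.mpr (by omega), Sym2.eq_swap⟩
  have hFT : ∀ e, e ∈ ((Finset.range (n - 1)).erase m).image f ∪ {s(x a, x b)} ↔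
      e ∈ T.edgeSet := by
    intro e
    constructor
    · intro he
      rw [Finset.mem_union, Finset.mem_image] at he
      rcases he with ⟨l, hl, rfl⟩ | he
      · rw [Finset.mem_erase, Finset.mem_range] at hl
        rw [hf, SimpleGraph.mem_edgeSet, hTadj]
        exact ⟨fun h => by have := hinj (by omega) (by omega) h; omega,
          Or.inl (Or.inl ⟨l, by omega, hl.1, rfl, rfl⟩)⟩
      · rw [Finset.mem_singleton] at he
        subst he
        rw [SimpleGraph.mem_edgeSet, hTadj]
        exact ⟨hxab, Or.inl (Or.inr ⟨rfl, rfl⟩)⟩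
    · induction e using Sym2.ind with
      | _ u v =>
        intro he
        rw [SimpleGraph.mem_edgeSet, hTadj] at he
        rw [Finset.mem_union, Finset.mem_image]
        rcases he.2 with (⟨l, h1, h2, rfl, rfl⟩ | ⟨rfl, rfl⟩) | (⟨l, h1, h2, rfl, rfl⟩ | ⟨rfl, rfl⟩)
        · exact Or.inl ⟨l, Finset.mem_erase.mpr ⟨h2, Finset.mem_range.mpr (by omega)⟩, rfl⟩
        · exact Or.inr (Finset.mem_singleton_self _)
        · exact Or.inl ⟨l, Finset.mem_erase.mpr ⟨h2, Finset.mem_range.mpr (by omega)⟩, Sym2.eq_swap⟩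
        · exact Or.inr (by rw [Finset.mem_singleton]; exact Sym2.eq_swap)
  have hnotmem : s(x a, x b) ∉ ((Finset.range (n - 1)).erase m).image f := by
    intro h
    rw [Finset.mem_image] at h
    obtain ⟨l, hl, hfl⟩ := h
    rw [Finset.mem_erase, Finset.mem_range] at hl
    rw [hf] at hfl
    simp only [Sym2.eq_iff] at hfl
    rcases hfl with ⟨h1, h2⟩ | ⟨h1, h2⟩
    · have := hinj (by omega) han h1
      have := hinj (by omega) hbn h2
      omega
    · have := hinj (by omega) hbn h1
      have := hinj (by omega) han h2
      omega
  have hinjf' : ∀ p ∈ (Finset.range (n - 1)).erase m, ∀ q ∈ (Finset.range (n - 1)).erase m,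
      f p = f q → p = q := fun p hp q hq h =>
    hinjf p (Finset.mem_of_mem_erase hp) q (Finset.mem_of_mem_erase hq) h
  have wpath : graphWeight (pathGraphOn n x) =
      ∑ l ∈ Finset.range (n - 1), dist (x l) (x (l + 1)) := by
    rw [graphWeight_eq _ _ hFpath, Finset.sum_image hinjf]
    exact Finset.sum_congr rfl fun l _ => edgeWeight_mk _ _
  have wT : graphWeight T =
      (∑ l ∈ (Finset.range (n - 1)).erase m, dist (x l) (x (l + 1))) + dist (x a) (x b) := by
    rw [graphWeight_eq _ _ hFT,
      Finset.sum_union (Finset.disjoint_singleton_right.mpr hnotmem),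
      Finset.sum_image hinjf', Finset.sum_singleton, edgeWeight_mk]
    congr 1
  have hmle := hmst.2 T htree
  rw [wpath, wT] at hmle
  have hmem : m ∈ Finset.range (n - 1) := Finset.mem_range.mpr (by omega)
  have hsum := Finset.add_sum_erase (Finset.range (n - 1))
    (fun l => dist (x l) (x (l + 1))) hmem
  linarith


/-- Remark 2.7: in a minimum spanning path of a finite ultrametric space, a block
of consecutive points all of whose internal edge weights are strictly smaller
than the two surrounding edge weights forms a closed ball of the space. -/
theorem consecutive_block_is_ball {X : Type*} [MetricSpace X] [Fintype X]
    (hu : ∀ x y z : X, dist x y ≤ max (dist x z) (dist z y))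
    (n : ℕ) (x : ℕ → X)
    (hbij : Function.Bijective fun i : Fin n => x i.val)
    (hmst : IsMST (pathGraphOn n x))
    (s : ℕ → ℝ) (hs : ∀ i : ℕ, i + 1 < n → s i = dist (x i) (x (i + 1)))
    (i k : ℕ) (hik : i ≤ k) (hk : k < n)
    (hleft : 1 ≤ i → ∀ l : ℕ, i ≤ l → l < k → s l < s (i - 1))
    (hright : k + 1 < n → ∀ l : ℕ, i ≤ l → l < k → s l < s k) :
    ∃ (c : X) (r : ℝ), 0 ≤ r ∧
      {y : X | ∃ j : ℕ, i ≤ j ∧ j ≤ k ∧ y = x j} = Metric.closedBall c r := by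
  have hinj : ∀ {p q : ℕ}, p < n → q < n → x p = x q → p = q := by
    intro p q hp hq h
    have := hbij.injective (a₁ := ⟨p, hp⟩) (a₂ := ⟨q, hq⟩) h
    exact congrArg Fin.val this
  set r : ℝ := ((((Finset.Ico i k).sup fun l => nndist (x l) (x (l + 1))) : NNReal) : ℝ) with hr
  refine ⟨x i, r, NNReal.coe_nonneg _, ?_⟩
  -- everything in the block is within r of x i
  have hr_bound : ∀ j, i ≤ j → j ≤ k → dist (x i) (x j) ≤ r := by
    intro j hij
    induction j, hij using Nat.le_induction with
    | base => intro _; rw [dist_self]; positivity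
    | succ j hij ih =>
      intro hjk
      have h1 : dist (x i) (x j) ≤ r := ih (by omega)
      have h2 : dist (x j) (x (j + 1)) ≤ r := by
        have hmem : j ∈ Finset.Ico i k := by rw [Finset.mem_Ico]; omega
        have : nndist (x j) (x (j + 1)) ≤ (Finset.Ico i k).sup fun l => nndist (x l) (x (l + 1)) :=
          Finset.le_sup (f := fun l => nndist (x l) (x (l + 1))) hmem
        calc dist (x j) (x (j + 1)) = (nndist (x j) (x (j + 1)) : ℝ) := (dist_nndist _ _)
        _ ≤ r := by exact_mod_cast this
      exact le_trans (hu (x i) (x (j + 1)) (x j)) (max_le h1 h2)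
  -- r is strictly less than a surrounding distance under the hypotheses
  have hr_lt : ∀ c c' : ℕ, c < n → c' < n → c ≠ c' →
      (∀ l, i ≤ l → l < k → s l < dist (x c) (x c')) → r < dist (x c) (x c') := by
    intro c c' hc hc' hne hlt
    have hpos : (0 : NNReal) < nndist (x c) (x c') := by
      simp only [← NNReal.coe_lt_coe, NNReal.coe_zero, coe_nndist]
      exact dist_pos.mpr fun h => hne (hinj hc hc' h)
    have : ((Finset.Ico i k).sup fun l => nndist (x l) (x (l + 1))) < nndist (x c) (x c') := by
      rw [Finset.sup_lt_iff hpos]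
      intro l hl
      rw [Finset.mem_Ico] at hl
      have hln : l + 1 < n := by omega
      have := hlt l hl.1 hl.2
      rw [hs l hln] at this
      simpa only [← NNReal.coe_lt_coe, coe_nndist] using this
    calc r = (((Finset.Ico i k).sup fun l => nndist (x l) (x (l + 1)) : NNReal) : ℝ) := rfl
    _ < (nndist (x c) (x c') : ℝ) := by exact_mod_cast this
    _ = dist (x c) (x c') := coe_nndist _ _
  ext y
  simp only [Set.mem_setOf_eq, Metric.mem_closedBall]
  constructor
  · rintro ⟨j, hij, hjk, rfl⟩
    rw [dist_comm]
    exact hr_bound j hij hjk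
  · intro hy
    obtain ⟨⟨j, hjn⟩, rfl⟩ := hbij.surjective y
    simp only at hy ⊢
    refine ⟨j, ?_, ?_, rfl⟩ <;> by_contra hcon <;> push_neg at hcon
    · -- j < i
      have hi1 : 1 ≤ i := by omega
      have hm1 : i - 1 + 1 = i := by omega
      have hex : dist (x (i - 1)) (x (i - 1 + 1)) ≤ dist (x j) (x i) :=
        exchange n x hbij hmst (i - 1) j i (by omega) (by omega) (by omega)
      rw [hm1] at hex
      have hlt : r < dist (x (i - 1)) (x i) := by
        refine hr_lt (i - 1) i (by omega) (by omega) (by omega) ?_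
        intro l hil hlk
        have := hleft hi1 l hil hlk
        rwa [hs (i - 1) (by omega), hm1] at this
      linarith
    · -- k < j
      have hk1 : k + 1 < n := by omega
      have hex : dist (x k) (x (k + 1)) ≤ dist (x i) (x j) :=
        exchange n x hbij hmst k i j hik (by omega) (by omega)
      have hlt : r < dist (x k) (x (k + 1)) := by
        refine hr_lt k (k + 1) (by omega) (by omega) (by omega) ?_
        intro l hil hlk
        have := hright hk1 l hil hlk
        rwa [hs k hk1] at this
      rw [dist_comm] at hy
      linarith
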